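/- Let (X,G) be a small Polish structure (for every n there are only countably many G-orbits on Xⁿ), let a ⊆ X be a finite tuple, and let A ⊆ B ⊆ X be finite. Then there exists b in the orbit of a over A such that b is nm-independent from B over A. -/

import Mathlib

/-- The pointwise stabilizer of a set `A ⊆ X` in `G`. -/
def pstab (G : Type*) {X : Type*} [Group G] [MulAction G X] (A : Set X) : Subgroup G where
  carrier := {g : G | ∀ x ∈ A, g • x = x}
  one_mem' := fun x _ => one_smul G x
  mul_mem' := by
    intro a b ha hb x hx
    rw [mul_smul, hb x hx, ha x hx]
  inv_mem' := by
    intro a ha x hx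
    rw [inv_smul_eq_iff, ha x hx]

/-- `a` is nm-independent from `B` over `A`: the preimage under `π_A : G_A → o(a/A)`,
`g ↦ g • a`, of the orbit `o(a/A ∪ B)` is non-meager in `π_A⁻¹[o(a/A)] = G_A`. -/
def NmInd (G : Type*) {X : Type*} [Group G] [TopologicalSpace G] [MulAction G X] {n : ℕ}
    (a : Fin n → X) (A B : Set X) : Prop :=
  ¬ IsMeagre {g : ↥(pstab G A) | (g • a : Fin n → X) ∈ MulAction.orbit ↥(pstab G (A ∪ B)) a}

lemma isNowhereDense_preimage_homeo {α β : Type*} [TopologicalSpace α] [TopologicalSpace β]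
    (e : α ≃ₜ β) {t : Set β} (ht : IsNowhereDense t) : IsNowhereDense (e ⁻¹' t) := by
  unfold IsNowhereDense at ht ⊢
  rw [← e.preimage_closure, ← e.preimage_interior, ht, Set.preimage_empty]

lemma isMeagre_preimage_homeo {α β : Type*} [TopologicalSpace α] [TopologicalSpace β]
    (e : α ≃ₜ β) {s : Set β} (hs : IsMeagre s) : IsMeagre (e ⁻¹' s) := by
  rw [isMeagre_iff_countable_union_isNowhereDense] at hs ⊢
  obtain ⟨S, hND, hc, hsub⟩ := hs
  refine ⟨(e ⁻¹' ·) '' S, ?_, hc.image _, ?_⟩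
  · rintro t ⟨u, hu, rfl⟩
    exact isNowhereDense_preimage_homeo e (hND u hu)
  · intro x hx
    obtain ⟨u, hu, hxu⟩ := hsub hx
    exact ⟨e ⁻¹' u, ⟨u, hu, rfl⟩, hxu⟩

/-- Existence of nm-independent extensions in small Polish structures. -/
theorem exists_nm_independent_extension {G X : Type*} [Group G] [TopologicalSpace G]
    [IsTopologicalGroup G] [PolishSpace G] [MulAction G X] [FaithfulSMul G X]
    (hstab : ∀ x : X, IsClosed (MulAction.stabilizer G x : Set G))
    (hsmall : ∀ n : ℕ, Countable (Quotient (MulAction.orbitRel G (Fin n → X))))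
    {n : ℕ} (a : Fin n → X) (A B : Finset X) (hAB : (A : Set X) ⊆ (B : Set X)) :
    ∃ b : Fin n → X, b ∈ MulAction.orbit ↥(pstab G (A : Set X)) a ∧ NmInd G b (A : Set X) (B : Set X) := by
  classical
  have hABu : (A : Set X) ∪ (B : Set X) = (B : Set X) := Set.union_eq_self_of_subset_left hAB
  set H := pstab G (A : Set X) with hH
  set K := pstab G (B : Set X) with hK
  -- `H` is a closed subgroup, hence a Polish group, hence a Baire space
  have hHclosed : IsClosed (H : Set G) := by
    have h1 : (H : Set G) = ⋂ x ∈ (A : Set X), (MulAction.stabilizer G x : Set G) := by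
      ext g
      simp only [Set.mem_iInter, SetLike.mem_coe, MulAction.mem_stabilizer_iff]
      rfl
    rw [h1]
    exact isClosed_biInter fun x _ => hstab x
  haveI : PolishSpace (↥H) := hHclosed.polishSpace
  letI := TopologicalSpace.upgradeIsCompletelyMetrizable (↥H)
  -- enumerate `B`
  set m := B.card with hm
  let c : Fin m → X := fun i => ((B.equivFin.symm i : X))
  have hc_mem : ∀ i, c i ∈ B := fun i => (B.equivFin.symm i).2
  have hc_surj : ∀ x ∈ B, ∃ i, c i = x := by
    intro x hx
    exact ⟨B.equivFin ⟨x, hx⟩, by simp [c]⟩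
  have hKiff : ∀ g : G, g ∈ K ↔ ∀ i, g • c i = c i := by
    intro g
    constructor
    · intro hg i; exact hg (c i) (hc_mem i)
    · intro h x hx
      obtain ⟨i, rfl⟩ := hc_surj x hx
      exact h i
  have happ : ∀ (g : G) (x : Fin n → X),
      g • Fin.append c x = Fin.append (fun i => g • c i) (fun j => g • x j) := by
    intro g x
    funext i
    refine Fin.addCases (fun i => ?_) (fun j => ?_) i
    · simp [Fin.append_left]
    · simp [Fin.append_right]
  -- the orbit quotient under `K` is countable
  haveI hQcount : Countable (Quotient (MulAction.orbitRel (↥K) (Fin n → X))) := by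
    haveI := hsmall (m + n)
    have hwd : ∀ (x y : Fin n → X), MulAction.orbitRel (↥K) (Fin n → X) x y →
        (Quotient.mk (MulAction.orbitRel G (Fin (m + n) → X)) (Fin.append c x)
          = Quotient.mk (MulAction.orbitRel G (Fin (m + n) → X)) (Fin.append c y)) := by
      intro x y hxy
      have hxy' : x ∈ MulAction.orbit (↥K) y := hxy
      obtain ⟨k, hk⟩ := hxy'
      apply Quotient.sound
      show Fin.append c x ∈ MulAction.orbit G (Fin.append c y)
      refine ⟨(k : G), ?_⟩
      show (k : G) • Fin.append c y = Fin.append c x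
      rw [happ]
      have h1 : (fun i => (k : G) • c i) = c := funext fun i => (hKiff (k : G)).mp k.2 i
      have h2 : (fun j => (k : G) • y j) = x := hk
      rw [h1, h2]
    let f : Quotient (MulAction.orbitRel (↥K) (Fin n → X)) →
        Quotient (MulAction.orbitRel G (Fin (m + n) → X)) :=
      Quotient.lift (fun x => Quotient.mk (MulAction.orbitRel G (Fin (m + n) → X)) (Fin.append c x)) hwd
    have hinj : Function.Injective f := by
      intro q1 q2
      induction q1 using Quotient.inductionOn with
      | h x =>
        induction q2 using Quotient.inductionOn with
        | h y =>
          intro hxy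
          have hxy' : Fin.append c x ∈ MulAction.orbit G (Fin.append c y) := Quotient.exact hxy
          obtain ⟨g, hg⟩ := hxy'
          have hg' := (happ g y).symm.trans hg
          have h1 : ∀ i, g • c i = c i := by
            intro i
            have := congrFun hg' (Fin.castAdd n i)
            rwa [Fin.append_left, Fin.append_left] at this
          have h2 : ∀ j, g • y j = x j := by
            intro j
            have := congrFun hg' (Fin.natAdd m j)
            rwa [Fin.append_right, Fin.append_right] at this
          apply Quotient.sound
          show x ∈ MulAction.orbit (↥K) y
          exact ⟨⟨g, (hKiff g).mpr h1⟩, funext h2⟩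
    exact hinj.countable
  -- the fibers of `g ↦ ⟦g • a⟧` cover `H`; one of them is non-meagre
  let P : Quotient (MulAction.orbitRel (↥K) (Fin n → X)) → Set (↥H) :=
    fun q => {g : ↥H | Quotient.mk (MulAction.orbitRel (↥K) (Fin n → X)) ((g : G) • a) = q}
  obtain ⟨q, hq⟩ : ∃ q, ¬ IsMeagre (P q) := by
    by_contra hcon
    push_neg at hcon
    haveI : Nonempty (Quotient (MulAction.orbitRel (↥K) (Fin n → X))) :=
      ⟨Quotient.mk _ a⟩
    obtain ⟨f, hf⟩ := exists_surjective_nat (Quotient (MulAction.orbitRel (↥K) (Fin n → X)))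
    have huniv : (Set.univ : Set (↥H)) = ⋃ k : ℕ, P (f k) := by
      ext g
      simp only [Set.mem_univ, Set.mem_iUnion, true_iff]
      obtain ⟨k, hk⟩ := hf (Quotient.mk (MulAction.orbitRel (↥K) (Fin n → X)) ((g : G) • a))
      exact ⟨k, hk.symm⟩
    have hmeag : IsMeagre (Set.univ : Set (↥H)) := by
      rw [huniv]
      exact isMeagre_iUnion fun k => hcon (f k)
    haveI : Nonempty (↥H) := ⟨1⟩
    have h0 : (Set.univ : Set (↥H))ᶜ ∈ residual (↥H) := hmeag
    rw [Set.compl_univ] at h0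
    have hdense : Dense (∅ : Set (↥H)) := dense_of_mem_residual h0
    exact Set.not_nonempty_empty hdense.nonempty
  -- pick a point in the non-meagre fiber
  have hPne : (P q).Nonempty := by
    by_contra hne
    rw [Set.not_nonempty_iff_eq_empty] at hne
    exact hq (hne ▸ IsMeagre.empty)
  obtain ⟨g0, hg0⟩ := hPne
  refine ⟨(g0 : G) • a, ⟨g0, rfl⟩, ?_⟩
  unfold NmInd
  rw [hABu]
  set b : Fin n → X := (g0 : G) • a with hb
  have hg0' : Quotient.mk (MulAction.orbitRel (↥K) (Fin n → X)) b = q := hg0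
  intro hmeag
  apply hq
  -- translate the non-meagre fiber by `g0`
  have hset : {g : ↥H | (g • b : Fin n → X) ∈ MulAction.orbit (↥K) b}
      = (Homeomorph.mulRight g0) ⁻¹' (P q) := by
    ext h
    have hmr : (Homeomorph.mulRight g0) h = h * g0 := rfl
    simp only [Set.mem_setOf_eq, Set.mem_preimage, hmr, P]
    have hsm : (h • b : Fin n → X) = ((h * g0 : ↥H) : G) • a := by
      show (h : G) • b = ((h : G) * (g0 : G)) • a
      rw [hb, mul_smul]
    rw [← hsm, ← hg0']
    constructor
    · intro hmem
      apply Quotient.sound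
      exact hmem
    · intro heq
      exact Quotient.exact heq
  have hm1 : IsMeagre ((Homeomorph.mulRight g0) ⁻¹' (P q)) := by
    rw [← hset]
    exact hmeag
  have h2 : IsMeagre ((Homeomorph.mulRight g0).symm ⁻¹' ((Homeomorph.mulRight g0) ⁻¹' (P q))) :=
    isMeagre_preimage_homeo _ hm1
  rwa [← Set.preimage_comp, Homeomorph.self_comp_symm, Set.preimage_id] at h2
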